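/- Let G be a topological group that is topologically finitely generated (i.e. there is a finite subset whose generated subgroup is dense). Then for every natural number r, the set of closed subgroups of G of index r is finite. -/

import Mathlib

/-- Conjugation of permutations along an equivalence, as a monoid hom. -/
def permCongrHom' {α β : Type*} (e : α ≃ β) : Equiv.Perm α →* Equiv.Perm β where
  toFun := e.permCongr
  map_one' := e.permCongr_refl
  map_mul' p q := by
    ext x
    simp [Equiv.Perm.mul_apply]

/-- A topologically finitely generated topological group has only finitely many
closed subgroups of any given finite index `r`. -/
theorem closed_subgroups_of_index_finite
    {G : Type*} [Group G] [TopologicalSpace G] [IsTopologicalGroup G]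
    (hfg : ∃ S : Finset G, Dense ((Subgroup.closure (S : Set G) : Subgroup G) : Set G))
    (r : ℕ) :
    {H : Subgroup G | IsClosed (H : Set G) ∧ Finite (G ⧸ H) ∧ Nat.card (G ⧸ H) = r}.Finite := by
  classical
  obtain ⟨S, hS⟩ := hfg
  set T : Set (Subgroup G) :=
    {H : Subgroup G | IsClosed (H : Set G) ∧ Finite (G ⧸ H) ∧ Nat.card (G ⧸ H) = r} with hT
  suffices h : Finite ↥T from Set.toFinite _
  -- basic facts about elements of T
  have hFin : ∀ H : ↥T, Finite (G ⧸ (H : Subgroup G)) := fun H => H.2.2.1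
  have hOpen : ∀ H : ↥T, IsOpen ((H : Subgroup G) : Set G) := by
    intro H
    haveI := hFin H
    haveI : (H : Subgroup G).FiniteIndex := Subgroup.finiteIndex_of_finite_quotient
    exact Subgroup.isOpen_of_isClosed_of_finiteIndex _ H.2.1
  have hDisc : ∀ H : ↥T, DiscreteTopology (G ⧸ (H : Subgroup G)) := fun H =>
    QuotientGroup.discreteTopology (hOpen H)
  -- choose an equivalence with `Fin r` for each quotient
  have hE : ∀ H : ↥T, Nonempty ((G ⧸ (H : Subgroup G)) ≃ Fin r) := by
    intro H
    haveI := hFin H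
    exact ⟨Finite.equivFinOfCardEq H.2.2.2⟩
  let e : ∀ H : ↥T, (G ⧸ (H : Subgroup G)) ≃ Fin r := fun H => (hE H).some
  -- the permutation representation on `Fin r`
  let ψ : ↥T → (G →* Equiv.Perm (Fin r)) := fun H =>
    (permCongrHom' (e H)).comp (MulAction.toPermHom G (G ⧸ (H : Subgroup G)))
  have hψ : ∀ (H : ↥T) (g : G) (k : Fin r),
      ψ H g k = e H (g • (e H).symm k) := by
    intro H g k
    simp [ψ, permCongrHom', MulAction.toPermHom]
  -- membership in H is detected by ψ and the image of 1
  have hmem : ∀ (H : ↥T) (g : G),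
      g ∈ (H : Subgroup G) ↔ ψ H g (e H ((1 : G) : G ⧸ (H : Subgroup G)))
        = e H ((1 : G) : G ⧸ (H : Subgroup G)) := by
    intro H g
    rw [hψ, Equiv.symm_apply_apply, Equiv.apply_eq_iff_eq]
    have : g • ((1 : G) : G ⧸ (H : Subgroup G)) = ((g : G) : G ⧸ (H : Subgroup G)) := by
      rw [MulAction.Quotient.smul_mk, smul_eq_mul, mul_one]
    rw [this, QuotientGroup.eq]
    simp
  -- continuity: the smul maps into the (discrete) quotients are continuous
  have hcont : ∀ (H : ↥T) (q : G ⧸ (H : Subgroup G)),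
      Continuous fun g : G => g • q := by
    intro H q
    obtain ⟨x, rfl⟩ := QuotientGroup.mk_surjective q
    have : (fun g : G => g • (QuotientGroup.mk x : G ⧸ (H : Subgroup G)))
        = QuotientGroup.mk ∘ (fun g : G => g * x) := by
      ext g
      simp [MulAction.Quotient.smul_mk, smul_eq_mul]
    rw [this]
    exact continuous_quotient_mk'.comp (continuous_mul_right x)
  -- two elements of T with the same data are equal
  have hinj : Function.Injective (fun H : ↥T =>
      ((fun s : ↥(S : Finset G) => ψ H (s : G)),
        e H ((1 : G) : G ⧸ (H : Subgroup G)))) := by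
    intro H₁ H₂ hf
    have hval : ∀ s ∈ (S : Set G), ψ H₁ s = ψ H₂ s := by
      intro s hs
      have := congrArg Prod.fst hf
      exact congrFun this ⟨s, hs⟩
    have hpt : e H₁ ((1 : G) : G ⧸ (H₁ : Subgroup G))
        = e H₂ ((1 : G) : G ⧸ (H₂ : Subgroup G)) := congrArg Prod.snd hf
    -- eqLocus is a closed subgroup containing S, hence everything by density
    have hle : Subgroup.closure (S : Set G) ≤ (ψ H₁).eqLocus (ψ H₂) :=
      Subgroup.closure_le _ |>.mpr hval
    have hclosed : IsClosed (((ψ H₁).eqLocus (ψ H₂) : Subgroup G) : Set G) := by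
      have heq : (((ψ H₁).eqLocus (ψ H₂) : Subgroup G) : Set G)
          = ⋂ k : Fin r, (fun g : G =>
              ((g • (e H₁).symm k : G ⧸ (H₁ : Subgroup G)),
               (g • (e H₂).symm k : G ⧸ (H₂ : Subgroup G)))) ⁻¹'
              {p | e H₁ p.1 = e H₂ p.2} := by
        ext g
        simp only [Set.mem_iInter, Set.mem_preimage, Set.mem_setOf_eq, SetLike.mem_coe]
        constructor
        · intro hg k
          have : ψ H₁ g k = ψ H₂ g k := by rw [hg]
          rwa [hψ, hψ] at this
        · intro hg
          refine Equiv.ext fun k => ?_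
          rw [hψ, hψ]
          exact hg k
      rw [heq]
      refine isClosed_iInter fun k => ?_
      haveI := hDisc H₁
      haveI := hDisc H₂
      exact IsClosed.preimage (((hcont H₁ _).prodMk (hcont H₂ _))) (isClosed_discrete _)
    have huniv : (Set.univ : Set G) ⊆ (((ψ H₁).eqLocus (ψ H₂) : Subgroup G) : Set G) := by
      rw [← hS.closure_eq]
      exact hclosed.closure_subset_iff.mpr (SetLike.coe_subset_coe.mpr hle)
    have hψeq : ψ H₁ = ψ H₂ :=
      MonoidHom.ext fun g => huniv (Set.mem_univ g)
    apply Subtype.ext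
    ext g
    rw [hmem H₁ g, hmem H₂ g, hψeq, hpt]
  exact Finite.of_injective _ hinj
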